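/- Let n be a natural number, let J be an invertible n×n complex matrix with J·conj(J) = -1 (an antiunitary 'quaternionic' structure squaring to -1, where conj denotes entrywise complex conjugation), and let M be an invertible n×n complex matrix satisfying J·conj(M)·J⁻¹ = M. Then det M is a real number and det M > 0. -/

import Mathlib

open Polynomial Matrix Module Complex

noncomputable instance : RingHomSurjective (starRingEnd ℂ) := ⟨fun x => ⟨star x, by simp⟩⟩

/-- A complex vector space with an antilinear endomorphism squaring to `-1` has even dimension. -/
lemma quat_even_aux : ∀ (k : ℕ) (V : Type) [AddCommGroup V] [Module ℂ V]
    [FiniteDimensional ℂ V] (c : V →ₛₗ[starRingEnd ℂ] V),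
    (∀ v, c (c v) = -v) → Module.finrank ℂ V = k → Even k := by
  intro k
  induction k using Nat.strong_induction_on with
  | _ k ih =>
    intro V _ _ _ c hc hk
    rcases Nat.eq_zero_or_pos k with h0 | hpos
    · simp [h0]
    have : Nontrivial V := Module.nontrivial_of_finrank_pos (R := ℂ) (M := V) (by omega)
    obtain ⟨v, hv⟩ := exists_ne (0 : V)
    have hind : LinearIndependent ℂ ![v, c v] := by
      rw [LinearIndependent.pair_iff]
      intro s t hst
      by_contra hcon
      have ht : t ≠ 0 := by
        rintro rfl
        simp only [zero_smul, add_zero, smul_eq_zero] at hst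
        tauto
      have h1 : t • (c v) = (-s) • v := by
        rw [neg_smul, eq_neg_iff_add_eq_zero, add_comm]; exact hst
      have hcv : c v = (t⁻¹ * -s) • v := by
        calc c v = (t⁻¹ * t) • c v := by rw [inv_mul_cancel₀ ht, one_smul]
          _ = t⁻¹ • (t • c v) := (smul_smul _ _ _).symm
          _ = t⁻¹ • ((-s) • v) := by rw [h1]
          _ = (t⁻¹ * -s) • v := smul_smul _ _ _
      set a : ℂ := t⁻¹ * -s with ha
      have h2 : c (c v) = ((starRingEnd ℂ) a * a) • v := by
        rw [hcv, LinearMap.map_smulₛₗ, hcv, smul_smul]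
      have h3 : ((starRingEnd ℂ) a * a + 1) • v = 0 := by
        rw [add_smul, one_smul, ← h2, hc, neg_add_cancel]
      have h4 : ((starRingEnd ℂ) a * a + 1) = 0 := by
        rcases smul_eq_zero.mp h3 with h | h
        · exact h
        · exact absurd h hv
      have h5 : ((Complex.normSq a : ℂ) + 1) = 0 := by
        rw [← h4, Complex.normSq_eq_conj_mul_self]
      have h6 : Complex.normSq a + 1 = 0 := by
        have := congrArg Complex.re h5
        simpa using this
      have := Complex.normSq_nonneg a
      linarith
    set W : Submodule ℂ V := Submodule.span ℂ {v, c v} with hW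
    have hvW : v ∈ W := Submodule.subset_span (by simp)
    have hcvW : c v ∈ W := Submodule.subset_span (by simp)
    have hWrank : Module.finrank ℂ W = 2 := by
      have h := finrank_span_eq_card hind
      have hr : Set.range ![v, c v] = {v, c v} := by
        simp only [Matrix.range_cons, Matrix.range_empty, Set.union_empty,
          Set.union_singleton]
        exact Set.pair_comm _ _
      rw [hr] at h
      simpa using h
    have hmapsto : ∀ x ∈ W, c x ∈ W := by
      intro x hx
      rcases Submodule.mem_span_pair.mp hx with ⟨s, t, rfl⟩
      rw [map_add, LinearMap.map_smulₛₗ, LinearMap.map_smulₛₗ, hc]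
      exact W.add_mem (W.smul_mem _ hcvW) (W.smul_mem _ (W.neg_mem hvW))
    let c' : (V ⧸ W) →ₛₗ[starRingEnd ℂ] (V ⧸ W) :=
      Submodule.mapQ W W c (fun x hx => hmapsto x hx)
    have hc' : ∀ q, c' (c' q) = -q := by
      intro q
      obtain ⟨x, rfl⟩ := Submodule.mkQ_surjective W q
      show c' (c' (Submodule.Quotient.mk x)) = _
      rw [Submodule.mapQ_apply, Submodule.mapQ_apply, hc]
      rfl
    have hquot : Module.finrank ℂ (V ⧸ W) + 2 = k := by
      have := Submodule.finrank_quotient_add_finrank W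
      rw [hWrank] at this
      omega
    have hlt : Module.finrank ℂ (V ⧸ W) < k := by omega
    have heven := ih _ hlt (V ⧸ W) c' hc' rfl
    rcases heven with ⟨m, hm⟩
    exact ⟨m + 1, by omega⟩

open Complex

private lemma mul_pos_real {x y : ℂ} (hx : x.im = 0 ∧ 0 < x.re) (hy : y.im = 0 ∧ 0 < y.re) :
    (x * y).im = 0 ∧ 0 < (x * y).re := by
  constructor
  · rw [Complex.mul_im, hx.1, hy.1]; ring
  · rw [Complex.mul_re, hx.1, hy.1]; nlinarith [hx.2, hy.2]

private lemma prod_pos_aux [DecidableEq ℂ] : ∀ (k : ℕ) (s : Multiset ℂ), s.card = k →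
    (0 : ℂ) ∉ s → s.map (starRingEnd ℂ) = s →
    (∀ z ∈ s, (starRingEnd ℂ) z = z → Even (s.count z)) →
    (s.prod).im = 0 ∧ 0 < (s.prod).re := by
  intro k
  induction k using Nat.strong_induction_on with
  | _ k ih =>
    intro s hcard h0 hconj heven
    rcases Nat.eq_zero_or_pos k with hk0 | hkpos
    · subst hk0
      rw [Multiset.card_eq_zero] at hcard
      subst hcard
      simp
    have hsne : s ≠ 0 := by
      intro h; rw [h] at hcard; simp at hcard; omega
    obtain ⟨a, ha⟩ := Multiset.exists_mem_of_ne_zero hsne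
    have ha0 : a ≠ 0 := fun h => h0 (h ▸ ha)
    by_cases hreal : (starRingEnd ℂ) a = a
    · -- real element: appears with even multiplicity ≥ 2
      have hc1 : 1 ≤ s.count a := Multiset.one_le_count_iff_mem.mpr ha
      have hceven : Even (s.count a) := heven a ha hreal
      have hc2 : 2 ≤ s.count a := by
        rcases hceven with ⟨m, hm⟩; omega
      have ha' : a ∈ s.erase a := by
        rw [← Multiset.one_le_count_iff_mem, Multiset.count_erase_self]; omega
      set s' := (s.erase a).erase a with hs'
      have hcons : s = a ::ₘ a ::ₘ s' := by
        rw [hs', Multiset.cons_erase ha', Multiset.cons_erase ha]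
      have hcard' : s'.card = k - 2 := by
        have := congrArg Multiset.card hcons
        simp at this; omega
      have h0' : (0 : ℂ) ∉ s' :=
        fun h => h0 (Multiset.mem_of_mem_erase (Multiset.mem_of_mem_erase h))
      have hinj : Function.Injective (starRingEnd ℂ) := (starRingEnd ℂ).injective
      have hconj' : s'.map (starRingEnd ℂ) = s' := by
        rw [hs', Multiset.map_erase _ hinj, Multiset.map_erase _ hinj, hconj, hreal]
      have heven' : ∀ z ∈ s', (starRingEnd ℂ) z = z → Even (s'.count z) := by
        intro z hz hzr
        have hzs : z ∈ s := Multiset.mem_of_mem_erase (Multiset.mem_of_mem_erase hz)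
        have hcz := heven z hzs hzr
        by_cases hza : z = a
        · subst hza
          have : s'.count z = s.count z - 2 := by
            rw [hs', Multiset.count_erase_self, Multiset.count_erase_self]; omega
          rw [this]
          rcases hcz with ⟨m, hm⟩
          exact ⟨m - 1, by omega⟩
        · have : s'.count z = s.count z := by
            rw [hs', Multiset.count_erase_of_ne hza, Multiset.count_erase_of_ne hza]
          rw [this]; exact hcz
      have hIH := ih (k - 2) (by omega) s' hcard' h0' hconj' heven'
      have haim : a.im = 0 := Complex.conj_eq_iff_im.mp hreal
      have hare : a.re ≠ 0 := by
        intro h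
        apply ha0
        exact Complex.ext h haim
      have haa : ((a * a).im = 0 ∧ 0 < (a * a).re) := by
        constructor
        · rw [Complex.mul_im, haim]; ring
        · rw [Complex.mul_re, haim]
          have := mul_self_pos.mpr hare
          nlinarith
      rw [hcons, Multiset.prod_cons, Multiset.prod_cons, ← mul_assoc]
      exact mul_pos_real haa hIH
    · -- non-real element: pair with its conjugate
      set b := (starRingEnd ℂ) a with hb
      have hbs : b ∈ s := by
        rw [← hconj]
        exact Multiset.mem_map_of_mem _ ha
      have hba : b ≠ a := fun h => hreal h
      have hb' : b ∈ s.erase a := (Multiset.mem_erase_of_ne hba).mpr hbs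
      set s' := (s.erase a).erase b with hs'
      have hcons : s = a ::ₘ b ::ₘ s' := by
        rw [hs', Multiset.cons_erase hb', Multiset.cons_erase ha]
      have hcard' : s'.card = k - 2 := by
        have := congrArg Multiset.card hcons
        simp at this; omega
      have h0' : (0 : ℂ) ∉ s' :=
        fun h => h0 (Multiset.mem_of_mem_erase (Multiset.mem_of_mem_erase h))
      have hinj : Function.Injective (starRingEnd ℂ) := (starRingEnd ℂ).injective
      have hbb : (starRingEnd ℂ) b = a := by rw [hb]; exact Complex.conj_conj a
      have hconj' : s'.map (starRingEnd ℂ) = s' := by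
        rw [hs', Multiset.map_erase _ hinj, Multiset.map_erase _ hinj, hconj, hbb,
          Multiset.erase_comm]
      have heven' : ∀ z ∈ s', (starRingEnd ℂ) z = z → Even (s'.count z) := by
        intro z hz hzr
        have hzs : z ∈ s := Multiset.mem_of_mem_erase (Multiset.mem_of_mem_erase hz)
        have hza : z ≠ a := by rintro rfl; exact hreal hzr
        have hzb : z ≠ b := by
          intro h
          apply hba
          calc b = z := h.symm
            _ = (starRingEnd ℂ) z := hzr.symm
            _ = (starRingEnd ℂ) b := by rw [h]
            _ = a := hbb
        have : s'.count z = s.count z := by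
          rw [hs', Multiset.count_erase_of_ne hzb, Multiset.count_erase_of_ne hza]
        rw [this]; exact heven z hzs hzr
      have hIH := ih (k - 2) (by omega) s' hcard' h0' hconj' heven'
      have hab : ((a * b).im = 0 ∧ 0 < (a * b).re) := by
        rw [hb, Complex.mul_conj]
        constructor
        · simp
        · simp only [Complex.ofReal_re]
          exact Complex.normSq_pos.mpr ha0
      rw [hcons, Multiset.prod_cons, Multiset.prod_cons, ← mul_assoc]
      exact mul_pos_real hab hIH
open Polynomial Matrix Module Complex

private lemma quat_conj_mulVec {n : ℕ} (A : Matrix (Fin n) (Fin n) ℂ) (v : Fin n → ℂ) :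
    star (A *ᵥ v) = (A.map (starRingEnd ℂ)) *ᵥ (star v) := by
  funext i
  have h := RingHom.map_mulVec (starRingEnd ℂ) A v i
  rw [Pi.star_apply, ← starRingEnd_apply, h]
  rfl

private lemma quat_charpoly_similarity {n : ℕ} (P A : Matrix (Fin n) (Fin n) ℂ)
    (hP : IsUnit P) : (P⁻¹ * A * P).charpoly = A.charpoly := by
  have hPd : IsUnit P.det := (Matrix.isUnit_iff_isUnit_det P).mp hP
  have h1 : (P⁻¹).map (C : ℂ →+* ℂ[X]) * P.map (C : ℂ →+* ℂ[X]) = 1 := by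
    rw [← Matrix.map_mul, Matrix.nonsing_inv_mul P hPd,
      Matrix.map_one _ (map_zero _) (map_one _)]
  have key : charmatrix (P⁻¹ * A * P) =
      (P⁻¹).map (C : ℂ →+* ℂ[X]) * charmatrix A * P.map (C : ℂ →+* ℂ[X]) := by
    unfold Matrix.charmatrix
    simp only [RingHom.mapMatrix_apply]
    rw [Matrix.mul_sub, Matrix.sub_mul]
    congr 1
    · have hcomm : Matrix.scalar (Fin n) (X : ℂ[X]) * (P⁻¹).map (C : ℂ →+* ℂ[X]) =
          (P⁻¹).map (C : ℂ →+* ℂ[X]) * Matrix.scalar (Fin n) (X : ℂ[X]) :=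
        Matrix.scalar_commute _ (fun r => Commute.all _ _) _
      rw [← hcomm, mul_assoc, h1, mul_one]
    · rw [← Matrix.map_mul, ← Matrix.map_mul]
  rw [Matrix.charpoly, key, Matrix.det_mul, Matrix.det_mul, Matrix.charpoly]
  have hxz : ((P⁻¹).map (C : ℂ →+* ℂ[X])).det * (P.map (C : ℂ →+* ℂ[X])).det = 1 := by
    rw [← Matrix.det_mul, h1, Matrix.det_one]
  calc ((P⁻¹).map (C : ℂ →+* ℂ[X])).det * (charmatrix A).det * (P.map (C : ℂ →+* ℂ[X])).det
      = ((P⁻¹).map (C : ℂ →+* ℂ[X])).det * (P.map (C : ℂ →+* ℂ[X])).det *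
        (charmatrix A).det := by ring
    _ = (charmatrix A).det := by rw [hxz, one_mul]

private lemma quat_charpoly_shift {n : ℕ} (A : Matrix (Fin n) (Fin n) ℂ) (μ : ℂ) :
    (A - μ • 1).charpoly = A.charpoly.comp (X + Polynomial.C μ) := by
  have hcomp : A.charpoly.comp (X + Polynomial.C μ) =
      (eval₂RingHom Polynomial.C (X + Polynomial.C μ)) A.charpoly := rfl
  rw [hcomp, Matrix.charpoly, Matrix.charpoly, RingHom.map_det]
  congr 1
  ext i j
  by_cases h : i = j
  · subst h
    simp [charmatrix_apply, Matrix.map_apply, Matrix.diagonal_apply_eq,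
      Matrix.sub_apply, Matrix.smul_apply, Matrix.one_apply_eq, map_sub, smul_eq_mul]
    ring
  · simp [charmatrix_apply, Matrix.map_apply, Matrix.diagonal_apply_ne _ h,
      Matrix.sub_apply, Matrix.smul_apply, Matrix.one_apply_ne h, smul_eq_mul]

private lemma quat_charpoly_toLin' {n : ℕ} (A : Matrix (Fin n) (Fin n) ℂ) :
    (Matrix.toLin' A).charpoly = A.charpoly := by
  rw [← LinearMap.charpoly_toMatrix (Matrix.toLin' A) (Pi.basisFun ℂ (Fin n)),
    LinearMap.toMatrix_eq_toMatrix', LinearMap.toMatrix'_toLin']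
private lemma quat_even_rootMultiplicity {n : ℕ} (J M : Matrix (Fin n) (Fin n) ℂ)
    (hJ : J * J.map (starRingEnd ℂ) = -1)
    (hJM : J * M.map (starRingEnd ℂ) = M * J)
    (μ : ℂ) (hμ : (starRingEnd ℂ) μ = μ) :
    Even (Polynomial.rootMultiplicity μ M.charpoly) := by
  classical
  set N : Matrix (Fin n) (Fin n) ℂ := M - μ • 1 with hN
  have hNJ : J * N.map (starRingEnd ℂ) = N * J := by
    have hmap : N.map (starRingEnd ℂ) = M.map (starRingEnd ℂ) - μ • 1 := by
      ext i j
      by_cases h : i = j <;>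
        simp [hN, Matrix.sub_apply, Matrix.smul_apply, Matrix.one_apply, h, hμ, map_sub]
    rw [hmap, Matrix.mul_sub, Matrix.sub_mul, hJM]
    congr 1
    rw [Matrix.mul_smul, Matrix.smul_mul, mul_one, one_mul]
  have hsemi : SemiconjBy J (N.map (starRingEnd ℂ)) N := hNJ
  have hmapk : ∀ k : ℕ, (N ^ k).map (starRingEnd ℂ) = (N.map (starRingEnd ℂ)) ^ k := by
    intro k
    have := map_pow ((starRingEnd ℂ).mapMatrix) N k
    simpa [RingHom.mapMatrix_apply] using this
  have hpow : ∀ k : ℕ, (Matrix.toLin' N) ^ k = Matrix.toLin' (N ^ k) := by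
    intro k
    induction k with
    | zero => simp [pow_zero, Matrix.toLin'_one]; rfl
    | succ k ihk =>
      rw [pow_succ, pow_succ, ihk, Module.End.mul_eq_comp, ← Matrix.toLin'_mul]
  set V := Module.End.maxGenEigenspace (Matrix.toLin' N) 0 with hV
  have hmemV : ∀ x, x ∈ V ↔ ∃ k : ℕ, N ^ k *ᵥ x = 0 := by
    intro x
    rw [hV, Module.End.mem_maxGenEigenspace]
    simp only [zero_smul, sub_zero]
    constructor
    · rintro ⟨k, hk⟩
      exact ⟨k, by rw [hpow k, Matrix.toLin'_apply] at hk; exact hk⟩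
    · rintro ⟨k, hk⟩
      exact ⟨k, by rw [hpow k, Matrix.toLin'_apply]; exact hk⟩
  have hstep : ∀ x, x ∈ V → (J *ᵥ star x) ∈ V := by
    intro x hx
    rcases (hmemV x).mp hx with ⟨k, hk⟩
    refine (hmemV _).mpr ⟨k, ?_⟩
    rw [Matrix.mulVec_mulVec, ← (hsemi.pow_right k).eq, ← Matrix.mulVec_mulVec,
      ← hmapk, ← quat_conj_mulVec, hk, star_zero, Matrix.mulVec_zero]
  let c : V →ₛₗ[starRingEnd ℂ] V :=
    { toFun := fun x => ⟨J *ᵥ star (x : Fin n → ℂ), hstep x x.2⟩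
      map_add' := by
        intro x y
        apply Subtype.ext
        show J *ᵥ star ((x : Fin n → ℂ) + (y : Fin n → ℂ)) =
          J *ᵥ star (x : Fin n → ℂ) + J *ᵥ star (y : Fin n → ℂ)
        rw [star_add, Matrix.mulVec_add]
      map_smul' := by
        intro a x
        apply Subtype.ext
        show J *ᵥ star (a • (x : Fin n → ℂ)) =
          (starRingEnd ℂ) a • (J *ᵥ star (x : Fin n → ℂ))
        rw [star_smul, Matrix.mulVec_smul, starRingEnd_apply] }
  have hcc : ∀ x : V, c (c x) = -x := by
    intro x
    apply Subtype.ext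
    show J *ᵥ star (J *ᵥ star (x : Fin n → ℂ)) = -(x : Fin n → ℂ)
    rw [quat_conj_mulVec, star_star, Matrix.mulVec_mulVec, hJ, Matrix.neg_mulVec,
      Matrix.one_mulVec]
  have heven : Even (Module.finrank ℂ V) := quat_even_aux _ V c hcc rfl
  rw [Polynomial.rootMultiplicity_eq_natTrailingDegree, ← quat_charpoly_shift M μ,
    ← quat_charpoly_toLin' (M - μ • 1), ← LinearMap.finrank_maxGenEigenspace_zero_eq]
  exact heven

/-- **EAZ class AII, complex-conjugation type.**
Let `J` be an invertible `n × n` complex matrix with `J ⬝ conj J = -1` (a quaternionic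
antiunitary structure squaring to `-1`), and let `M` be an invertible `n × n` complex
matrix satisfying `J ⬝ conj M ⬝ J⁻¹ = M`.  Then `det M` is real and positive. -/
theorem det_real_pos_of_quaternionic_symmetry (n : ℕ)
    (J M : Matrix (Fin n) (Fin n) ℂ)
    (hJunit : IsUnit J)
    (hJ : J * J.map (starRingEnd ℂ) = -1)
    (hMunit : IsUnit M)
    (hM : J * M.map (starRingEnd ℂ) * J⁻¹ = M) :
    M.det.im = 0 ∧ 0 < M.det.re := by
  classical
  have hJdet : IsUnit J.det := (Matrix.isUnit_iff_isUnit_det J).mp hJunit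
  have hJM : J * M.map (starRingEnd ℂ) = M * J := by
    have h := congrArg (fun B => B * J) hM
    simpa only [mul_assoc, Matrix.nonsing_inv_mul J hJdet, mul_one] using h
  have hMc : M.map (starRingEnd ℂ) = J⁻¹ * M * J := by
    have hassoc : J⁻¹ * (J * M.map (starRingEnd ℂ) * J⁻¹) * J
        = (J⁻¹ * J) * M.map (starRingEnd ℂ) * (J⁻¹ * J) := by
      simp only [Matrix.mul_assoc]
    conv_rhs => rw [← hM]
    rw [hassoc, Matrix.nonsing_inv_mul J hJdet, one_mul, mul_one]
  have hreal : M.charpoly.map (starRingEnd ℂ) = M.charpoly := by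
    rw [← Matrix.charpoly_map, hMc, quat_charpoly_similarity _ _ hJunit]
  have hdet0 : M.det ≠ 0 := ((Matrix.isUnit_iff_isUnit_det M).mp hMunit).ne_zero
  set R := M.charpoly.roots with hR
  have hdetprod : M.det = R.prod := Matrix.det_eq_prod_roots_charpoly M
  have h0R : (0 : ℂ) ∉ R := by
    intro h
    exact hdet0 (by rw [hdetprod, Multiset.prod_eq_zero h])
  have hconjR : R.map (starRingEnd ℂ) = R := by
    rw [hR, ← (IsAlgClosed.splits _).roots_map (starRingEnd ℂ), hreal]
  have hevenR : ∀ z ∈ R, (starRingEnd ℂ) z = z → Even (R.count z) := by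
    intro z hz hzr
    rw [hR, Polynomial.count_roots]
    exact quat_even_rootMultiplicity J M hJ hJM z hzr
  have := prod_pos_aux (Multiset.card R) R rfl h0R hconjR hevenR
  rw [hdetprod]
  exact this
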